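/- arXiv:2311.11352 — 4 statements merged into one kernel-verified Lean document; each statement's English description precedes it below -/
import Mathlib

section
/- Probability generating function of the Bell distribution: for every θ > 0 and every real s with |s| ≤ 1, ∑_{z=0}^∞ s^z p_θ(z) = exp(e^{sθ} − e^θ). -/
open Real

set_option maxHeartbeats 1000000

/-- The `z`-th Bell number given by Dobinski's formula (with `0^0 = 1`). -/
noncomputable def bellDobinski (z : ℕ) : ℝ :=
  (Real.exp 1)⁻¹ * ∑' k : ℕ, (k : ℝ) ^ z / (Nat.factorial k : ℝ)

/-- The probability mass function of the Bell distribution with parameter `θ`: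
`p_θ(z) = θ^z e^{1 - e^θ} B_z / z!`. -/
noncomputable def bellPMF (θ : ℝ) (z : ℕ) : ℝ :=
  θ ^ z * Real.exp (1 - Real.exp θ) * bellDobinski z / (Nat.factorial z : ℝ)

lemma real_hasSum_exp (x : ℝ) : HasSum (fun n : ℕ => x ^ n / n.factorial) (Real.exp x) := by
  rw [Real.exp_eq_exp_ℝ]
  exact NormedSpace.expSeries_div_hasSum_exp x

lemma pow_le_fact_mul_exp (z k : ℕ) : ((k : ℝ)) ^ z ≤ z.factorial * Real.exp k := by
  have h := le_hasSum (real_hasSum_exp (k : ℝ)) z (fun j _ => by positivity)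
  have hz : (0:ℝ) < z.factorial := by positivity
  rw [div_le_iff₀ hz] at h
  linarith [h]

lemma summable_pow_div_fact (z : ℕ) :
    Summable fun k : ℕ => (k : ℝ) ^ z / k.factorial := by
  refine Summable.of_nonneg_of_le (fun k => by positivity) (fun k => ?_)
    (((Real.summable_pow_div_factorial (Real.exp 1)).mul_left (z.factorial : ℝ)))
  rw [mul_div_assoc']
  apply div_le_div_of_nonneg_right _ (by positivity)
  calc ((k:ℝ)) ^ z ≤ z.factorial * Real.exp k := pow_le_fact_mul_exp z k
    _ = z.factorial * (Real.exp 1) ^ k := by rw [← Real.exp_one_pow]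

/-- Probability generating function of the Bell distribution: for every `θ > 0` and every
real `s` with `|s| ≤ 1`, `∑_{z=0}^∞ s^z p_θ(z) = exp (e^{sθ} - e^θ)`. -/
theorem bellPMF_pgf (θ : ℝ) (hθ : 0 < θ) (s : ℝ) (hs : |s| ≤ 1) :
    HasSum (fun z : ℕ => s ^ z * bellPMF θ z)
      (Real.exp (Real.exp (s * θ) - Real.exp θ)) := by
  set c : ℝ := Real.exp (-Real.exp θ) with hc
  -- the double family, indexed by (k, z)
  set f : ℕ × ℕ → ℝ := fun p => c * ((s * θ * p.1) ^ p.2 / (p.1.factorial * p.2.factorial))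
    with hf_def
  have hcpos : 0 < c := Real.exp_pos _
  -- rewriting a fiber (k fixed)
  have hfiber : ∀ (t : ℝ) (k z : ℕ),
      c * ((t * k) ^ z / (k.factorial * z.factorial)) =
        c / k.factorial * ((t * k) ^ z / z.factorial) := by
    intro t k z
    rw [div_mul_div_comm, ← mul_div_assoc]
  -- absolute value of f
  have habs_eq : ∀ p : ℕ × ℕ,
      |f p| = c * ((|s| * θ * p.1) ^ p.2 / (p.1.factorial * p.2.factorial)) := by
    rintro ⟨k, z⟩
    simp only [hf_def]
    rw [abs_mul, abs_of_pos hcpos, abs_div, abs_pow, abs_mul, abs_mul,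
      abs_of_pos hθ, Nat.abs_cast,
      abs_of_nonneg (by positivity : (0:ℝ) ≤ (k.factorial : ℝ) * z.factorial)]
  -- summability of |f|
  have habs : Summable fun p : ℕ × ℕ => |f p| := by
    rw [summable_prod_of_nonneg (fun p => abs_nonneg _)]
    have hsum : ∀ k : ℕ, HasSum (fun z => |f (k, z)|)
        (c / k.factorial * Real.exp (|s| * θ * k)) := by
      intro k
      have h := ((real_hasSum_exp (|s| * θ * k)).mul_left (c / k.factorial))
      have heq : (fun z : ℕ => |f (k, z)|) =
          fun z : ℕ => c / k.factorial * ((|s| * θ * k) ^ z / z.factorial) := by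
        funext z; rw [habs_eq (k, z), hfiber]
      rw [heq]
      simpa [mul_div_assoc] using h
    constructor
    · intro k; exact (hsum k).summable
    · have : (fun k : ℕ => ∑' z, |f (k, z)|) =
          fun k => c * ((Real.exp (|s| * θ)) ^ k / k.factorial) := by
        funext k
        rw [(hsum k).tsum_eq, ← Real.exp_nat_mul]
        ring_nf
      rw [this]
      exact (Real.summable_pow_div_factorial (Real.exp (|s| * θ))).mul_left c
  have hf_summable : Summable f := habs.of_abs
  -- fiberwise over k: sum over z of f (k, z) equals c * exp(sθk)/k!
  have hk : ∀ k : ℕ, HasSum (fun z => f (k, z)) (c / k.factorial * Real.exp (s * θ * k)) := by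
    intro k
    have h := ((real_hasSum_exp (s * θ * k)).mul_left (c / k.factorial))
    have heq : (fun z : ℕ => f (k, z)) =
        fun z : ℕ => c / k.factorial * ((s * θ * k) ^ z / z.factorial) := by
      funext z; exact hfiber _ _ _
    rw [heq]
    simpa [mul_div_assoc] using h
  -- the sum over k of those fiber sums
  have hK : HasSum (fun k : ℕ => c / k.factorial * Real.exp (s * θ * k))
      (Real.exp (Real.exp (s * θ) - Real.exp θ)) := by
    have h := ((real_hasSum_exp (Real.exp (s * θ))).mul_left c)
    have heq : (fun k : ℕ => c * ((Real.exp (s * θ)) ^ k / k.factorial)) =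
        fun k : ℕ => c / k.factorial * Real.exp (s * θ * k) := by
      funext k
      rw [← Real.exp_nat_mul]
      ring_nf
    rw [heq] at h
    have hval : c * Real.exp (Real.exp (s * θ)) =
        Real.exp (Real.exp (s * θ) - Real.exp θ) := by
      rw [hc, ← Real.exp_add]; ring_nf
    rwa [hval] at h
  -- hence f has sum the target
  have hf : HasSum f (Real.exp (Real.exp (s * θ) - Real.exp θ)) := by
    have h1 : HasSum f (∑' p, f p) := hf_summable.hasSum
    have h2 := h1.prod_fiberwise hk
    rw [hK.unique h2]
    exact h1
  -- now fiber over z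
  have hswap : HasSum (fun p : ℕ × ℕ => f p.swap)
      (Real.exp (Real.exp (s * θ) - Real.exp θ)) :=
    (Equiv.prodComm ℕ ℕ).hasSum_iff.mpr hf
  apply hswap.prod_fiberwise
  intro z
  -- need : HasSum (fun k => f ((k, z) as swap of (z,k))) (s ^ z * bellPMF θ z)
  have hS : HasSum (fun k : ℕ => (k : ℝ) ^ z / k.factorial)
      (∑' k : ℕ, (k : ℝ) ^ z / k.factorial) := (summable_pow_div_fact z).hasSum
  have h := hS.mul_left (c * (s * θ) ^ z / z.factorial)
  have heq : (fun k : ℕ => f ((z, k) : ℕ × ℕ).swap) =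
      fun k : ℕ => c * (s * θ) ^ z / z.factorial * ((k : ℝ) ^ z / k.factorial) := by
    funext k
    simp only [hf_def, Prod.swap_prod_mk]
    rw [mul_pow]
    field_simp
  have hval : c * (s * θ) ^ z / z.factorial * (∑' k : ℕ, (k : ℝ) ^ z / k.factorial) =
      s ^ z * bellPMF θ z := by
    rw [bellPMF, bellDobinski, hc]
    have he : Real.exp (-Real.exp θ) = Real.exp (1 - Real.exp θ) * (Real.exp 1)⁻¹ := by
      rw [← Real.exp_neg, ← Real.exp_add]; ring_nf
    rw [he, mul_pow]
    field_simp
  rw [heq, ← hval]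
  exact h
end

section
/- Mean of the Bell distribution: for every θ > 0, ∑_{z=0}^∞ z · p_θ(z) = θ e^θ (in particular the series converges). -/
open Real

lemma hasSum_exp_aux (x : ℝ) :
    HasSum (fun n : ℕ => x ^ n / (Nat.factorial n : ℝ)) (Real.exp x) := by
  rw [Real.exp_eq_exp_ℝ]
  exact NormedSpace.expSeries_div_hasSum_exp x

lemma hasSum_mul_exp_aux (x : ℝ) :
    HasSum (fun n : ℕ => (n : ℝ) * x ^ n / (Nat.factorial n : ℝ)) (x * Real.exp x) := by
  have h := (hasSum_exp_aux x).mul_left x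
  have h2 : (fun n : ℕ => x * (x ^ n / (Nat.factorial n : ℝ)))
      = fun n : ℕ => ((n + 1 : ℕ) : ℝ) * x ^ (n + 1) / (Nat.factorial (n + 1) : ℝ) := by
    funext n
    rw [Nat.factorial_succ, pow_succ]
    push_cast
    field_simp
  rw [h2] at h
  have h' : HasSum (fun n : ℕ => ((n + 1 : ℕ) : ℝ) * x ^ (n + 1) / (Nat.factorial (n + 1) : ℝ))
      (x * Real.exp x - ∑ i ∈ Finset.range 1, (i : ℝ) * x ^ i / (Nat.factorial i : ℝ)) := by
    simpa using h
  exact (hasSum_nat_add_iff' 1).mp h'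

/-- Mean of the Bell distribution: for every `θ > 0`, `∑_{z=0}^∞ z ⬝ p_θ(z) = θ e^θ`
(in particular the series converges). -/
theorem bellPMF_mean (θ : ℝ) (hθ : 0 < θ) :
    HasSum (fun z : ℕ => (z : ℝ) * bellPMF θ z) (θ * Real.exp θ) := by
  set C : ℝ := Real.exp (-Real.exp θ) with hC
  set g : ℕ × ℕ → ℝ := fun p =>
    C * ((p.2 : ℝ) * ((p.1 : ℝ) * θ) ^ p.2 / (Nat.factorial p.2 : ℝ)) / (Nat.factorial p.1 : ℝ)
    with hg
  have hgnn : 0 ≤ g := by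
    intro p
    have : (0:ℝ) ≤ ((p.1 : ℝ) * θ) ^ p.2 := by positivity
    have hC0 : (0:ℝ) ≤ C := (Real.exp_pos _).le
    simp only [hg]
    positivity
  -- fiber sums over z, for fixed k
  have hfiber : ∀ k : ℕ, HasSum (fun z => g (k, z))
      ((C / (Nat.factorial k : ℝ)) * (((k : ℝ) * θ) * Real.exp ((k : ℝ) * θ))) := by
    intro k
    have := (hasSum_mul_exp_aux ((k : ℝ) * θ)).mul_left (C / (Nat.factorial k : ℝ))
    convert this using 2 with z
    · rfl
    simp only [hg]
    ring
  -- outer sum over k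
  have houter : HasSum
      (fun k : ℕ => (C / (Nat.factorial k : ℝ)) * (((k : ℝ) * θ) * Real.exp ((k : ℝ) * θ)))
      (θ * Real.exp θ) := by
    have h := (hasSum_mul_exp_aux (Real.exp θ)).mul_left (C * θ)
    have heq : (fun k : ℕ => C * θ * ((k : ℝ) * (Real.exp θ) ^ k / (Nat.factorial k : ℝ)))
        = fun k : ℕ => (C / (Nat.factorial k : ℝ)) * (((k : ℝ) * θ) * Real.exp ((k : ℝ) * θ)) := by
      funext k
      rw [← Real.exp_nat_mul]
      ring
    rw [heq] at h
    convert h using 1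
    · rfl
    rw [hC]
    rw [show C * θ * (Real.exp θ * Real.exp (Real.exp θ))
        = (Real.exp (-Real.exp θ) * Real.exp (Real.exp θ)) * (θ * Real.exp θ) by rw [hC]; ring,
      ← Real.exp_add]
    simp
  -- summability of g on the product
  have hgsum : Summable g := by
    rw [summable_prod_of_nonneg hgnn]
    refine ⟨fun k => (hfiber k).summable, ?_⟩
    have : (fun k : ℕ => ∑' z, g (k, z))
        = fun k : ℕ => (C / (Nat.factorial k : ℝ)) * (((k : ℝ) * θ) * Real.exp ((k : ℝ) * θ)) := by
      funext k; exact (hfiber k).tsum_eq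
    rw [this]
    exact houter.summable
  -- HasSum g (θ * exp θ)
  have hgS : HasSum g (θ * Real.exp θ) := by
    have h1 : HasSum (fun k : ℕ => ∑' z, g (k, z)) (∑' p, g p) :=
      hgsum.hasSum.prod_fiberwise fun k => (hfiber k).summable.hasSum
    have h2 : HasSum (fun k : ℕ => ∑' z, g (k, z)) (θ * Real.exp θ) := by
      have : (fun k : ℕ => ∑' z, g (k, z))
          = fun k : ℕ => (C / (Nat.factorial k : ℝ)) * (((k : ℝ) * θ) * Real.exp ((k : ℝ) * θ)) := by
        funext k; exact (hfiber k).tsum_eq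
      rw [this]; exact houter
    exact (h1.unique h2) ▸ hgsum.hasSum
  -- swap
  have hswap : HasSum (fun p : ℕ × ℕ => g p.swap) (θ * Real.exp θ) :=
    (Equiv.prodComm ℕ ℕ).hasSum_iff.2 hgS
  -- z-fibers
  have hzfib : ∀ z : ℕ, Summable fun k : ℕ => g (k, z) := by
    intro z
    have := (summable_prod_of_nonneg (f := fun p : ℕ × ℕ => g p.swap)
      (fun p => hgnn p.swap)).mp hswap.summable
    exact this.1 z
  have hfibval : ∀ z : ℕ, ∑' k : ℕ, g (k, z) = (z : ℝ) * bellPMF θ z := by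
    intro z
    have : (fun k : ℕ => g (k, z))
        = fun k : ℕ => (C * (z : ℝ) * θ ^ z / (Nat.factorial z : ℝ))
          * ((k : ℝ) ^ z / (Nat.factorial k : ℝ)) := by
      funext k
      simp only [hg, mul_pow]
      ring
    rw [this, tsum_mul_left]
    rw [bellPMF, bellDobinski, hC]
    rw [show Real.exp (1 - Real.exp θ) = Real.exp (-Real.exp θ) * Real.exp 1 by
      rw [← Real.exp_add]; ring_nf]
    have he : Real.exp 1 * (Real.exp 1)⁻¹ = 1 := mul_inv_cancel₀ (Real.exp_pos 1).ne'
    field_simp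
  -- conclude
  have := hswap.prod_fiberwise fun z => (hzfib z).hasSum
  simp only [hfibval] at this
  exact this
end

section
/- Variance of the Bell distribution: for every θ > 0, ∑_{z=0}^∞ z² · p_θ(z) − (θ e^θ)² = θ(1 + θ) e^θ (in particular the second moment series converges). -/
open Real

lemma bell_tsum_exp (x : ℝ) : ∑' k : ℕ, x ^ k / (Nat.factorial k : ℝ) = Real.exp x := by
  rw [Real.exp_eq_exp_ℝ, NormedSpace.exp_eq_tsum_div]

lemma bell_shift1 (x : ℝ) (k : ℕ) :
    ((k + 1 : ℕ) : ℝ) * x ^ (k + 1) / (Nat.factorial (k + 1) : ℝ)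
      = x * (x ^ k / (Nat.factorial k : ℝ)) := by
  have h0 : (Nat.factorial k : ℝ) ≠ 0 := Nat.cast_ne_zero.mpr k.factorial_ne_zero
  have h1 : ((k : ℝ) + 1) ≠ 0 := by positivity
  rw [Nat.factorial_succ]; push_cast; field_simp; ring

lemma bell_summable1 (x : ℝ) :
    Summable (fun k : ℕ => (k : ℝ) * x ^ k / (Nat.factorial k : ℝ)) := by
  rw [← summable_nat_add_iff 1]
  exact ((Real.summable_pow_div_factorial x).mul_left x).congr fun k => (bell_shift1 x k).symm

lemma bell_tsum1 (x : ℝ) :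
    ∑' k : ℕ, (k : ℝ) * x ^ k / (Nat.factorial k : ℝ) = x * Real.exp x := by
  rw [Summable.tsum_eq_zero_add (bell_summable1 x)]
  simp only [Nat.cast_zero, zero_mul, zero_div, zero_add]
  rw [tsum_congr (bell_shift1 x), tsum_mul_left, bell_tsum_exp]

lemma bell_shift2 (x : ℝ) (k : ℕ) :
    ((k + 1 : ℕ) : ℝ) ^ 2 * x ^ (k + 1) / (Nat.factorial (k + 1) : ℝ)
      = x * ((k : ℝ) * x ^ k / (Nat.factorial k : ℝ)) + x * (x ^ k / (Nat.factorial k : ℝ)) := by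
  have h0 : (Nat.factorial k : ℝ) ≠ 0 := Nat.cast_ne_zero.mpr k.factorial_ne_zero
  have h1 : ((k : ℝ) + 1) ≠ 0 := by positivity
  rw [Nat.factorial_succ]; push_cast; field_simp; ring

lemma bell_summable2 (x : ℝ) :
    Summable (fun k : ℕ => (k : ℝ) ^ 2 * x ^ k / (Nat.factorial k : ℝ)) := by
  rw [← summable_nat_add_iff 1]
  exact (((bell_summable1 x).mul_left x).add
    ((Real.summable_pow_div_factorial x).mul_left x)).congr fun k => (bell_shift2 x k).symm

lemma bell_tsum2 (x : ℝ) :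
    ∑' k : ℕ, (k : ℝ) ^ 2 * x ^ k / (Nat.factorial k : ℝ) = (x + x ^ 2) * Real.exp x := by
  rw [Summable.tsum_eq_zero_add (bell_summable2 x)]
  simp only [Nat.cast_zero, zero_pow, zero_mul, zero_div, zero_add, ne_eq, OfNat.ofNat_ne_zero,
    not_false_eq_true]
  rw [tsum_congr (bell_shift2 x),
    Summable.tsum_add (((bell_summable1 x).mul_left x)) ((Real.summable_pow_div_factorial x).mul_left x),
    tsum_mul_left, tsum_mul_left, bell_tsum1, bell_tsum_exp]
  ring


/-- Variance of the Bell distribution: for every `θ > 0`, the second-moment series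
`∑_{z=0}^∞ z² ⬝ p_θ(z)` converges and
`∑_{z=0}^∞ z² ⬝ p_θ(z) - (θ e^θ)² = θ (1 + θ) e^θ`. -/
theorem bellPMF_variance (θ : ℝ) (hθ : 0 < θ) :
    (Summable fun z : ℕ => (z : ℝ) ^ 2 * bellPMF θ z) ∧
      (∑' z : ℕ, (z : ℝ) ^ 2 * bellPMF θ z) - (θ * Real.exp θ) ^ 2
        = θ * (1 + θ) * Real.exp θ := by
  set x : ℝ := Real.exp θ with hx
  set c : ℝ := Real.exp (1 - x) * (Real.exp 1)⁻¹ with hc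
  have hc0 : 0 < c := by positivity
  have hcx : c * Real.exp x = 1 := by
    rw [hc, ← Real.exp_neg 1, ← Real.exp_add, ← Real.exp_add,
      show (1:ℝ) - x + -1 + x = 0 by ring, Real.exp_zero]
  -- the double-sum term
  set g : ℕ × ℕ → ℝ := fun p =>
    c * ((p.2 : ℝ) ^ 2 * (θ * (p.1 : ℝ)) ^ p.2 / ((Nat.factorial p.2 : ℝ) * (Nat.factorial p.1 : ℝ)))
    with hg
  have hg_nonneg : 0 ≤ g := by
    intro p
    have : (0:ℝ) ≤ θ * (p.1 : ℝ) := by positivity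
    positivity
  -- row summability (fixed k, sum over z)
  have hrow : ∀ k : ℕ, Summable fun z : ℕ => g (k, z) := by
    intro k
    have := (bell_summable2 (θ * k)).mul_left (c / (Nat.factorial k : ℝ))
    refine this.congr fun z => ?_
    simp only [hg]
    field_simp
  have hrowsum : ∀ k : ℕ,
      (∑' z : ℕ, g (k, z))
        = c * θ * ((k : ℝ) * x ^ k / (Nat.factorial k : ℝ))
          + c * θ ^ 2 * ((k : ℝ) ^ 2 * x ^ k / (Nat.factorial k : ℝ)) := by
    intro k
    have h1 : (∑' z : ℕ, g (k, z))
        = (c / (Nat.factorial k : ℝ)) * ∑' z : ℕ, (z : ℝ) ^ 2 * (θ * k) ^ z / (Nat.factorial z : ℝ) := by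
      rw [← tsum_mul_left]
      refine tsum_congr fun z => ?_
      simp only [hg]
      field_simp
    rw [h1, bell_tsum2]
    have hek : Real.exp (θ * k) = x ^ k := by
      rw [hx, ← Real.exp_nat_mul]; ring_nf
    rw [hek]
    have h0 : (Nat.factorial k : ℝ) ≠ 0 := Nat.cast_ne_zero.mpr k.factorial_ne_zero
    field_simp
  -- summability of row sums over k
  have hcol : Summable fun k : ℕ => ∑' z : ℕ, g (k, z) := by
    refine (((bell_summable1 x).mul_left (c * θ)).add
      ((bell_summable2 x).mul_left (c * θ ^ 2))).congr fun k => ?_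
    rw [hrowsum k]
  -- summability of the double family
  have hG : Summable g :=
    (summable_prod_of_nonneg hg_nonneg).mpr ⟨hrow, hcol⟩
  -- pointwise identity: z² ⬝ pmf z = ∑' k, g (k, z)
  have hpt : ∀ z : ℕ, (z : ℝ) ^ 2 * bellPMF θ z = ∑' k : ℕ, g (k, z) := by
    intro z
    have h1 : (∑' k : ℕ, g (k, z))
        = (c * (z : ℝ) ^ 2 * θ ^ z / (Nat.factorial z : ℝ))
          * ∑' k : ℕ, (k : ℝ) ^ z / (Nat.factorial k : ℝ) := by
      rw [← tsum_mul_left]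
      refine tsum_congr fun k => ?_
      simp only [hg, mul_pow]
      field_simp
    rw [h1]
    simp only [bellPMF, bellDobinski, hc]
    ring
  constructor
  · exact (hG.prod_symm.prod.congr fun z => (hpt z).symm)
  · have hswap : (∑' z : ℕ, (z : ℝ) ^ 2 * bellPMF θ z) = ∑' k : ℕ, ∑' z : ℕ, g (k, z) := by
      rw [tsum_congr hpt]
      exact Summable.tsum_comm hG
    rw [hswap, tsum_congr hrowsum,
      Summable.tsum_add (((bell_summable1 x).mul_left (c * θ))) ((bell_summable2 x).mul_left (c * θ ^ 2)),
      tsum_mul_left, tsum_mul_left, bell_tsum1, bell_tsum2]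
    linear_combination (θ * x + θ ^ 2 * x + θ ^ 2 * x ^ 2) * hcx
end

section
/- Compound Poisson representation of the Bell distribution: for θ > 0, let μ := e^θ − 1 and let q be the zero-truncated Poisson(θ) mass function on ℕ, q(y) := θ^y / (y! (e^θ − 1)) for y ≥ 1 and q(0) := 0. Then for every z ∈ ℕ, ∑_{n=0}^∞ (e^{-μ} μ^n / n!) · q^{*n}(z) = p_θ(z), where q^{*n} denotes the n-fold convolution of q (with q^{*0} the point mass at 0). Equivalently, if N ~ Poisson(e^θ − 1) and Y_1, Y_2, … are i.i.d. zero-truncated Poisson(θ) independent of N, then Y_1 + ⋯ + Y_N ~ Bell(θ). -/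
open Real

/-- Convolution of two mass functions on `ℕ`: `(f * g)(z) = ∑_{y=0}^{z} f(y) g(z - y)`. -/
def conv (f g : ℕ → ℝ) : ℕ → ℝ :=
  fun z => ∑ y ∈ Finset.range (z + 1), f y * g (z - y)

/-- `n`-fold convolution of a mass function on `ℕ`, with `f^{*0}` the point mass at `0`. -/
def convPow (f : ℕ → ℝ) : ℕ → ℕ → ℝ
  | 0 => fun z => if z = 0 then 1 else 0
  | n + 1 => conv f (convPow f n)

/-- The zero-truncated Poisson(θ) mass function: `q(y) = θ^y / (y! (e^θ - 1))` for `y ≥ 1`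
and `q(0) = 0`. -/
noncomputable def ztPoisson (θ : ℝ) : ℕ → ℝ :=
  fun y => if y = 0 then 0 else θ ^ y / ((Nat.factorial y : ℝ) * (Real.exp θ - 1))

noncomputable def Tsum (n z : ℕ) : ℝ :=
  ∑ j ∈ Finset.range (n + 1), (-1 : ℝ) ^ j * (n.choose j : ℝ) * (j : ℝ) ^ z

lemma Tsum_shift (n z : ℕ) :
    ∑ i ∈ Finset.range (n + 1), (-1 : ℝ) ^ (i + 1) * (n.choose (i + 1) : ℝ) * ((i : ℝ) + 1) ^ z
      = Tsum n z - (0 : ℝ) ^ z := by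
  have h : Tsum n z = ∑ j ∈ Finset.range (n + 2), (-1 : ℝ) ^ j * (n.choose j : ℝ) * (j : ℝ) ^ z := by
    rw [Finset.sum_range_succ, Nat.choose_succ_self]
    simp [Tsum]
  rw [h, Finset.sum_range_succ' _ (n + 1)]
  push_cast
  simp

lemma Tsum_succ (n z : ℕ) :
    Tsum (n + 1) z = Tsum n z -
      ∑ j ∈ Finset.range (n + 1), (-1 : ℝ) ^ j * (n.choose j : ℝ) * ((j : ℝ) + 1) ^ z := by
  have h0 : Tsum (n + 1) z
      = ∑ i ∈ Finset.range (n + 1),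
          (-1 : ℝ) ^ (i + 1) * ((n.choose i : ℝ) + (n.choose (i + 1) : ℝ)) * ((i : ℝ) + 1) ^ z
        + (0 : ℝ) ^ z := by
    rw [Tsum, Finset.sum_range_succ' _ (n + 1)]
    push_cast [Nat.choose_succ_succ]
    simp
  rw [h0]
  have h1 : ∀ i ∈ Finset.range (n + 1),
      (-1 : ℝ) ^ (i + 1) * ((n.choose i : ℝ) + (n.choose (i + 1) : ℝ)) * ((i : ℝ) + 1) ^ z
      = (-1 : ℝ) ^ (i + 1) * (n.choose (i + 1) : ℝ) * ((i : ℝ) + 1) ^ z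
        - (-1 : ℝ) ^ i * (n.choose i : ℝ) * ((i : ℝ) + 1) ^ z := by
    intro i _
    rw [pow_succ]
    ring
  rw [Finset.sum_congr rfl h1, Finset.sum_sub_distrib, Tsum_shift]
  ring

lemma binom_sum (x : ℝ) (z : ℕ) :
    ∑ y ∈ Finset.range (z + 1), (z.choose y : ℝ) * x ^ (z - y) = (x + 1) ^ z := by
  rw [add_pow]
  rw [← Finset.sum_range_reflect]
  refine Finset.sum_congr rfl fun y hy => ?_
  rw [Finset.mem_range] at hy
  have hy' : y ≤ z := Nat.lt_succ_iff.mp hy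
  simp only [Nat.add_sub_cancel]
  rw [Nat.choose_symm hy', Nat.sub_sub_self hy', one_pow]
  ring

lemma convPow_const_mul (c : ℝ) (f : ℕ → ℝ) (n z : ℕ) :
    convPow (fun y => c * f y) n z = c ^ n * convPow f n z := by
  induction n generalizing z with
  | zero => simp [convPow]
  | succ n ih =>
    simp only [convPow, conv, ih]
    rw [Finset.mul_sum]
    refine Finset.sum_congr rfl fun y _ => ?_
    ring

lemma binomFactSum (x : ℝ) (z : ℕ) :
    ∑ y ∈ Finset.range (z + 1),
        x ^ (z - y) / ((Nat.factorial y : ℝ) * (Nat.factorial (z - y) : ℝ))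
      = (x + 1) ^ z / (Nat.factorial z : ℝ) := by
  rw [← binom_sum, Finset.sum_div]
  refine Finset.sum_congr rfl fun y hy => ?_
  have hy' : y ≤ z := Nat.lt_succ_iff.mp (Finset.mem_range.mp hy)
  rw [Nat.cast_choose ℝ hy']
  have h1 : ((Nat.factorial y : ℕ) : ℝ) ≠ 0 := Nat.cast_ne_zero.mpr (Nat.factorial_ne_zero _)
  have h2 : ((Nat.factorial (z - y) : ℕ) : ℝ) ≠ 0 := Nat.cast_ne_zero.mpr (Nat.factorial_ne_zero _)
  have h3 : ((Nat.factorial z : ℕ) : ℝ) ≠ 0 := Nat.cast_ne_zero.mpr (Nat.factorial_ne_zero _)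
  field_simp

lemma convPow_trunc (θ : ℝ) (n z : ℕ) :
    convPow (fun y => if y = 0 then 0 else θ ^ y / (Nat.factorial y : ℝ)) n z
      = θ ^ z / (Nat.factorial z : ℝ) * ((-1 : ℝ) ^ n * Tsum n z) := by
  induction n generalizing z with
  | zero =>
    rcases eq_or_ne z 0 with hz | hz
    · subst hz; simp [convPow, Tsum]
    · simp [convPow, Tsum, hz, zero_pow hz]
  | succ n ih =>
    show conv _ _ z = _
    unfold conv
    simp only [ih]
    set h : ℕ → ℝ := fun y =>
      Tsum n (z - y) / ((Nat.factorial y : ℝ) * (Nat.factorial (z - y) : ℝ)) with hh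
    have step1 : ∀ y ∈ Finset.range (z + 1),
        (if y = 0 then 0 else θ ^ y / (Nat.factorial y : ℝ)) *
            (θ ^ (z - y) / (Nat.factorial (z - y) : ℝ) * ((-1 : ℝ) ^ n * Tsum n (z - y)))
          = (-1 : ℝ) ^ n * θ ^ z * (if y = 0 then 0 else h y) := by
      intro y hy
      have hy' : y ≤ z := Nat.lt_succ_iff.mp (Finset.mem_range.mp hy)
      rcases eq_or_ne y 0 with h0 | h0
      · simp [h0]
      · rw [if_neg h0, if_neg h0]
        have hpow : θ ^ y * θ ^ (z - y) = θ ^ z := by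
          rw [← pow_add, Nat.add_sub_cancel' hy']
        simp only [hh]
        field_simp
        linear_combination Tsum n (z - y) * hpow
    rw [Finset.sum_congr rfl step1, ← Finset.mul_sum]
    have step2 : ∑ y ∈ Finset.range (z + 1), (if y = 0 then 0 else h y)
        = (∑ y ∈ Finset.range (z + 1), h y) - h 0 := by
      have : ∀ y ∈ Finset.range (z + 1),
          (if y = 0 then 0 else h y) = h y - (if y = 0 then h y else 0) := by
        intro y _; split <;> simp
      rw [Finset.sum_congr rfl this, Finset.sum_sub_distrib,
        Finset.sum_ite_eq' (Finset.range (z + 1)) 0 h]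
      simp
    have step3 : ∑ y ∈ Finset.range (z + 1), h y
        = (∑ j ∈ Finset.range (n + 1),
            (-1 : ℝ) ^ j * (n.choose j : ℝ) * ((j : ℝ) + 1) ^ z) / (Nat.factorial z : ℝ) := by
      simp only [hh, Tsum, Finset.sum_div]
      rw [Finset.sum_comm]
      refine Finset.sum_congr rfl fun j _ => ?_
      have hb := binomFactSum (j : ℝ) z
      calc ∑ x ∈ Finset.range (z + 1), (-1 : ℝ) ^ j * (n.choose j : ℝ) * (j : ℝ) ^ (z - x) /
              ((Nat.factorial x : ℝ) * (Nat.factorial (z - x) : ℝ))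
          = (-1 : ℝ) ^ j * (n.choose j : ℝ) * ∑ x ∈ Finset.range (z + 1),
              (j : ℝ) ^ (z - x) / ((Nat.factorial x : ℝ) * (Nat.factorial (z - x) : ℝ)) := by
            rw [Finset.mul_sum]
            exact Finset.sum_congr rfl fun y _ => by ring
        _ = (-1 : ℝ) ^ j * (n.choose j : ℝ) * (((j : ℝ) + 1) ^ z / (Nat.factorial z : ℝ)) := by
            rw [hb]
        _ = (-1 : ℝ) ^ j * (n.choose j : ℝ) * ((j : ℝ) + 1) ^ z / (Nat.factorial z : ℝ) := by
            ring
    rw [step2, step3]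
    have h0 : h 0 = Tsum n z / (Nat.factorial z : ℝ) := by simp [hh]
    rw [h0, Tsum_succ]
    ring

/-- Compound Poisson representation of the Bell distribution: for `θ > 0`, with
`μ = e^θ - 1`, for every `z ∈ ℕ`,
`∑_{n=0}^∞ (e^{-μ} μ^n / n!) ⬝ q^{*n}(z) = p_θ(z)`, where `q` is the zero-truncated
Poisson(θ) mass function. Equivalently, if `N ~ Poisson(e^θ - 1)` and `Y₁, Y₂, …` are
i.i.d. zero-truncated Poisson(θ) independent of `N`, then `Y₁ + ⋯ + Y_N ~ Bell(θ)`. -/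
theorem bell_compound_poisson (θ : ℝ) (hθ : 0 < θ) (z : ℕ) :
    HasSum
      (fun n : ℕ =>
        Real.exp (-(Real.exp θ - 1)) * (Real.exp θ - 1) ^ n / (Nat.factorial n : ℝ) *
          convPow (ztPoisson θ) n z)
      (bellPMF θ z) := by
  set μ : ℝ := Real.exp θ - 1 with hμdef
  have hμ : 0 < μ := by
    have : (1 : ℝ) < Real.exp θ := by
      rw [← Real.exp_zero]; exact Real.exp_lt_exp.mpr hθ
    linarith
  have hμ' : μ ≠ 0 := ne_of_gt hμ
  -- rewrite ztPoisson as scalar multiple of truncated series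
  have hzt : ztPoisson θ = fun y => (1 / μ) * (if y = 0 then 0 else θ ^ y / (Nat.factorial y : ℝ)) := by
    funext y
    rcases eq_or_ne y 0 with h0 | h0
    · simp [ztPoisson, h0]
    · simp only [ztPoisson, if_neg h0]
      field_simp
      rw [hμdef]
      ring
      rw [neg_add_eq_sub, ← hμdef, ← sub_one_mul, ← hμdef]
      exact mul_inv_cancel₀ hμ'
  -- the two series to be Cauchy-multiplied
  set f : ℕ → ℝ := fun j => (j : ℝ) ^ z / (Nat.factorial j : ℝ) with hf
  set g : ℕ → ℝ := fun m => (-1 : ℝ) ^ m / (Nat.factorial m : ℝ) with hg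
  have hfnorm : Summable fun j => ‖f j‖ := by
    have hb : Summable (fun j : ℕ => ((2 : ℝ) ^ z) ^ j / (Nat.factorial j : ℝ)) :=
      Real.summable_pow_div_factorial _
    refine Summable.of_nonneg_of_le (fun j => norm_nonneg _) (fun j => ?_) hb
    have h1 : (0 : ℝ) ≤ f j := by positivity
    rw [Real.norm_eq_abs, abs_of_nonneg h1]
    have hj2 : (j : ℝ) ≤ 2 ^ j := by
      calc (j : ℝ) ≤ ((2 ^ j : ℕ) : ℝ) := by exact_mod_cast (Nat.lt_two_pow_self (n := j)).le
        _ = 2 ^ j := by push_cast; ring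
    have hnum : (j : ℝ) ^ z ≤ ((2 : ℝ) ^ z) ^ j := by
      rw [← pow_mul, mul_comm z j, pow_mul]
      exact pow_le_pow_left₀ (Nat.cast_nonneg j) hj2 z
    exact div_le_div_of_nonneg_right hnum (by positivity) |>.trans_eq rfl
  have hgnorm : Summable fun m => ‖g m‖ := by
    have hb : Summable (fun m : ℕ => (1 : ℝ) ^ m / (Nat.factorial m : ℝ)) :=
      Real.summable_pow_div_factorial _
    refine hb.congr fun m => ?_
    simp [hg, Real.norm_eq_abs, abs_div, abs_pow]
  have hfs : Summable f := hfnorm.of_norm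
  have hgsum : HasSum g (Real.exp (-1)) := by
    rw [Real.exp_eq_exp_ℝ]
    exact NormedSpace.expSeries_div_hasSum_exp (-1 : ℝ)
  -- Cauchy product
  have hcauchy := hasSum_sum_range_mul_of_summable_norm hfnorm hgnorm
  have htsumg : ∑' m, g m = Real.exp (-1) := hgsum.tsum_eq
  rw [htsumg] at hcauchy
  set A : ℝ := ∑' j, f j with hA
  -- multiply by constant
  have hfinal := hcauchy.mul_left (Real.exp (-μ) * θ ^ z / (Nat.factorial z : ℝ))
  -- identify the terms
  have hterm : ∀ n : ℕ,
      Real.exp (-μ) * μ ^ n / (Nat.factorial n : ℝ) * convPow (ztPoisson θ) n z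
        = Real.exp (-μ) * θ ^ z / (Nat.factorial z : ℝ) *
            ∑ k ∈ Finset.range (n + 1), f k * g (n - k) := by
    intro n
    rw [hzt, convPow_const_mul, convPow_trunc]
    have hsum : ∑ k ∈ Finset.range (n + 1), f k * g (n - k)
        = (-1 : ℝ) ^ n * Tsum n z / (Nat.factorial n : ℝ) := by
      rw [Tsum, Finset.mul_sum, Finset.sum_div]
      refine Finset.sum_congr rfl fun j hj => ?_
      have hj' : j ≤ n := Nat.lt_succ_iff.mp (Finset.mem_range.mp hj)
      have hsign : (-1 : ℝ) ^ (n - j) = (-1 : ℝ) ^ n * (-1 : ℝ) ^ j := by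
        have h1 : (-1 : ℝ) ^ (n - j) * (-1 : ℝ) ^ j = (-1 : ℝ) ^ n := by
          rw [← pow_add, Nat.sub_add_cancel hj']
        have h2 : (-1 : ℝ) ^ j * (-1 : ℝ) ^ j = 1 := by
          rw [← pow_add]; exact Even.neg_one_pow ⟨j, rfl⟩
        calc (-1 : ℝ) ^ (n - j) = (-1 : ℝ) ^ (n - j) * ((-1 : ℝ) ^ j * (-1 : ℝ) ^ j) := by
              rw [h2, mul_one]
          _ = ((-1 : ℝ) ^ (n - j) * (-1 : ℝ) ^ j) * (-1 : ℝ) ^ j := by ring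
          _ = (-1 : ℝ) ^ n * (-1 : ℝ) ^ j := by rw [h1]
      have hchoose : (n.choose j : ℝ) = (Nat.factorial n : ℝ) /
          ((Nat.factorial j : ℝ) * (Nat.factorial (n - j) : ℝ)) := Nat.cast_choose ℝ hj'
      simp only [hf, hg]
      rw [hchoose, hsign]
      have h1 : ((Nat.factorial j : ℕ) : ℝ) ≠ 0 := Nat.cast_ne_zero.mpr (Nat.factorial_ne_zero _)
      have h2 : ((Nat.factorial (n - j) : ℕ) : ℝ) ≠ 0 :=
        Nat.cast_ne_zero.mpr (Nat.factorial_ne_zero _)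
      have h3 : ((Nat.factorial n : ℕ) : ℝ) ≠ 0 := Nat.cast_ne_zero.mpr (Nat.factorial_ne_zero _)
      field_simp
    rw [hsum, one_div, inv_pow]
    have hμn : μ ^ n * (μ ^ n)⁻¹ = 1 := mul_inv_cancel₀ (pow_ne_zero n hμ')
    linear_combination Real.exp (-μ) * θ ^ z * ((-1 : ℝ) ^ n * Tsum n z) /
      ((Nat.factorial n : ℝ) * (Nat.factorial z : ℝ)) * hμn
  -- identify the value
  have hval : Real.exp (-μ) * θ ^ z / (Nat.factorial z : ℝ) * (A * Real.exp (-1))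
      = bellPMF θ z := by
    rw [bellPMF, bellDobinski, ← hA, Real.exp_neg 1]
    have : Real.exp (-μ) = Real.exp (1 - Real.exp θ) := by rw [hμdef]; ring_nf
    rw [this]
    ring
  rw [hval] at hfinal
  have heq : (fun n : ℕ =>
      Real.exp (-μ) * μ ^ n / (Nat.factorial n : ℝ) * convPow (ztPoisson θ) n z)
      = fun n : ℕ => Real.exp (-μ) * θ ^ z / (Nat.factorial z : ℝ) *
          ∑ k ∈ Finset.range (n + 1), f k * g (n - k) := funext hterm
  rw [heq]
  exact hfinal
end
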